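/- For every real number λ with 0 < λ < 2, one has 6·(λ²−λ+1)·F(4/3, −4/3, 8/3; 1−λ) − (2/3)·(λ+1)·(5λ²−8λ+5)·F(4/3, −1/3, 8/3; 1−λ) = (10/3)·λ^{5/3}. -/

import Mathlib

open Polynomial Finset
private lemma Pev_succ (x : ℝ) (n : ℕ) :
    (ascPochhammer ℝ (n+1)).eval x = (ascPochhammer ℝ n).eval x * (x + n) :=
  ascPochhammer_succ_eval n x
private lemma Pev_ne {x : ℝ} (hx : ∀ k : ℕ, x + k ≠ 0) (n : ℕ) :
    (ascPochhammer ℝ n).eval x ≠ 0 := by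
  induction n with
  | zero => simp
  | succ n ih => rw [Pev_succ]; exact mul_ne_zero ih (hx n)
private lemma sub_third_ne (n : ℕ) (a : ℤ) (ha : ¬ (3:ℤ) ∣ a) : (n:ℝ) - (a:ℝ)/3 ≠ 0 := by
  intro h
  have h2 : 3*(n:ℤ) - a = 0 := by exact_mod_cast (by linarith : 3*(n:ℝ) - (a:ℝ) = 0)
  omega
private lemma q_ne (n : ℕ) : (ascPochhammer ℝ n).eval (-4/3) ≠ 0 := by
  refine Pev_ne (fun k => ?_) n
  have := sub_third_ne k 4 (by decide)
  push_cast at this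
  intro h; exact this (by linarith)
private lemma r_eq (n : ℕ) : (ascPochhammer ℝ n).eval (-1/3) =
    (ascPochhammer ℝ n).eval (-4/3) * ((n:ℝ) - 4/3) * (-3/4) := by
  induction n with
  | zero => norm_num
  | succ n ih => rw [Pev_succ, Pev_succ, ih]; push_cast; ring
private lemma s_eq (n : ℕ) : (ascPochhammer ℝ n).eval (8/3) =
    (ascPochhammer ℝ n).eval (-4/3) * ((n:ℝ) - 4/3) * ((n:ℝ) - 1/3) * ((n:ℝ) + 2/3)
      * ((n:ℝ) + 5/3) * (81/40) := by
  induction n with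
  | zero => norm_num
  | succ n ih => rw [Pev_succ, Pev_succ, ih]; push_cast; ring
private lemma p_eq (n : ℕ) : (ascPochhammer ℝ n).eval (4/3) =
    (ascPochhammer ℝ n).eval (-5/3) * ((n:ℝ) - 5/3) * ((n:ℝ) - 2/3) * ((n:ℝ) + 1/3)
      * (27/10) := by
  induction n with
  | zero => norm_num
  | succ n ih => rw [Pev_succ, Pev_succ, ih]; push_cast; ring
private noncomputable def co (a b c : ℝ) (n : ℕ) : ℝ :=
  Polynomial.eval a (ascPochhammer ℝ n) * Polynomial.eval b (ascPochhammer ℝ n) /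
    (Polynomial.eval c (ascPochhammer ℝ n) * (n.factorial : ℝ))
private noncomputable def Cco (n : ℕ) : ℝ :=
  Polynomial.eval (-5/3 : ℝ) (ascPochhammer ℝ n) / (n.factorial : ℝ)


private def sh (f : ℕ → ℝ) : ℕ → ℝ
  | 0 => 0
  | n+1 => f n

@[simp] private lemma sh_zero (f : ℕ → ℝ) : sh f 0 = 0 := rfl
@[simp] private lemma sh_succ (f : ℕ → ℝ) (n : ℕ) : sh f (n+1) = f n := rfl

private lemma Pev_pos {x : ℝ} (hx : 0 < x) (n : ℕ) : 0 < (ascPochhammer ℝ n).eval x := by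
  induction n with
  | zero => simp
  | succ n ih => rw [Pev_succ]; exact mul_pos ih (by positivity)

set_option maxHeartbeats 1600000 in
private lemma Tzero (n : ℕ) :
    6 * co (4/3) (-4/3) (8/3) n - 6 * sh (co (4/3) (-4/3) (8/3)) n
      + 6 * sh (sh (co (4/3) (-4/3) (8/3))) n
      - (8/3) * co (4/3) (-1/3) (8/3) n + 4 * sh (co (4/3) (-1/3) (8/3)) n
      - 8 * sh (sh (co (4/3) (-1/3) (8/3))) n
      + (10/3) * sh (sh (sh (co (4/3) (-1/3) (8/3)))) n
      - (10/3) * Cco n = 0 := by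
  rcases n with _|_|_|n
  · norm_num [co, Cco]
  · norm_num [co, Cco, Pev_succ]
  · norm_num [co, Cco, Pev_succ, Nat.factorial_succ]
  · have hq := q_ne n
    have hf : ((n.factorial : ℝ)) ≠ 0 := by positivity
    have hFa : ∀ m : ℕ, ((m.factorial : ℝ)) ≠ 0 := fun m => by positivity
    have hB : ∀ m : ℕ, Polynomial.eval (8/3:ℝ) (ascPochhammer ℝ m) * ((m.factorial : ℝ)) ≠ 0 :=
      fun m => mul_ne_zero (Pev_pos (by norm_num) m).ne' (hFa m)
    have h43 : ((n:ℝ) - 4/3) ≠ 0 := by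
      have := sub_third_ne n 4 (by decide); push_cast at this; exact this
    have h13 : ((n:ℝ) - 1/3) ≠ 0 := by
      have := sub_third_ne n 1 (by decide); push_cast at this; exact this
    have hfD : (n.factorial:ℝ) * ((((n:ℝ)) - 4/3)*(((n:ℝ)) - 1/3)*(((n:ℝ)) + 2/3)*(((n:ℝ)) + 5/3)*(((n:ℝ)) + 1)*(((n:ℝ)) + 2)*(((n:ℝ)) + 3)*(((n:ℝ)) + 8/3)*(((n:ℝ)) + 11/3)*(((n:ℝ)) + 14/3)) ≠ 0 := by
      repeat' apply mul_ne_zero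
      all_goals first | exact h43 | exact h13 | positivity
    have eA1 : co (4/3) (-4/3) (8/3) (n+1) = (Polynomial.eval (-5/3:ℝ) (ascPochhammer ℝ n) / (n.factorial:ℝ)) * (((4/3)*(((n:ℝ)) - 5/3)*(((n:ℝ)) - 2/3)*(((n:ℝ)) + 1/3)*(((n:ℝ)) + 4/3)*(((n:ℝ)) - 4/3)*(((n:ℝ)) + 2)*(((n:ℝ)) + 11/3)*(((n:ℝ)) + 3)*(((n:ℝ)) + 14/3))/((((n:ℝ)) - 4/3)*(((n:ℝ)) - 1/3)*(((n:ℝ)) + 2/3)*(((n:ℝ)) + 5/3)*(((n:ℝ)) + 1)*(((n:ℝ)) + 2)*(((n:ℝ)) + 3)*(((n:ℝ)) + 8/3)*(((n:ℝ)) + 11/3)*(((n:ℝ)) + 14/3))) := by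
      simp only [co]
      rw [div_mul_div_comm, div_eq_div_iff (hB (n+1)) hfD]
      simp only [Pev_succ, Nat.factorial_succ]; rw [s_eq, p_eq]; push_cast; ring
    have eA2 : co (4/3) (-4/3) (8/3) (n+1+1) = (Polynomial.eval (-5/3:ℝ) (ascPochhammer ℝ n) / (n.factorial:ℝ)) * (((4/3)*(((n:ℝ)) - 5/3)*(((n:ℝ)) - 2/3)*(((n:ℝ)) + 1/3)*(((n:ℝ)) + 4/3)*(((n:ℝ)) - 4/3)*(((n:ℝ)) + 7/3)*(((n:ℝ)) - 1/3)*(((n:ℝ)) + 3)*(((n:ℝ)) + 14/3))/((((n:ℝ)) - 4/3)*(((n:ℝ)) - 1/3)*(((n:ℝ)) + 2/3)*(((n:ℝ)) + 5/3)*(((n:ℝ)) + 1)*(((n:ℝ)) + 2)*(((n:ℝ)) + 3)*(((n:ℝ)) + 8/3)*(((n:ℝ)) + 11/3)*(((n:ℝ)) + 14/3))) := by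
      simp only [co]
      rw [div_mul_div_comm, div_eq_div_iff (hB (n+1+1)) hfD]
      simp only [Pev_succ, Nat.factorial_succ]; rw [s_eq, p_eq]; push_cast; ring
    have eA3 : co (4/3) (-4/3) (8/3) (n+1+1+1) = (Polynomial.eval (-5/3:ℝ) (ascPochhammer ℝ n) / (n.factorial:ℝ)) * (((4/3)*(((n:ℝ)) - 5/3)*(((n:ℝ)) - 2/3)*(((n:ℝ)) + 1/3)*(((n:ℝ)) + 4/3)*(((n:ℝ)) - 4/3)*(((n:ℝ)) + 7/3)*(((n:ℝ)) - 1/3)*(((n:ℝ)) + 10/3)*(((n:ℝ)) + 2/3))/((((n:ℝ)) - 4/3)*(((n:ℝ)) - 1/3)*(((n:ℝ)) + 2/3)*(((n:ℝ)) + 5/3)*(((n:ℝ)) + 1)*(((n:ℝ)) + 2)*(((n:ℝ)) + 3)*(((n:ℝ)) + 8/3)*(((n:ℝ)) + 11/3)*(((n:ℝ)) + 14/3))) := by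
      simp only [co]
      rw [div_mul_div_comm, div_eq_div_iff (hB (n+1+1+1)) hfD]
      simp only [Pev_succ, Nat.factorial_succ]; rw [s_eq, p_eq]; push_cast; ring
    have eB0 : co (4/3) (-1/3) (8/3) n = (Polynomial.eval (-5/3:ℝ) (ascPochhammer ℝ n) / (n.factorial:ℝ)) * (((4/3)*(((n:ℝ)) - 5/3)*(((n:ℝ)) - 2/3)*(((n:ℝ)) + 1/3)*(((n:ℝ)) + 1)*(((n:ℝ)) + 8/3)*(((n:ℝ)) + 2)*(((n:ℝ)) + 11/3)*(((n:ℝ)) + 3)*(((n:ℝ)) + 14/3)*(-3/4)*(((n:ℝ)) - 4/3))/((((n:ℝ)) - 4/3)*(((n:ℝ)) - 1/3)*(((n:ℝ)) + 2/3)*(((n:ℝ)) + 5/3)*(((n:ℝ)) + 1)*(((n:ℝ)) + 2)*(((n:ℝ)) + 3)*(((n:ℝ)) + 8/3)*(((n:ℝ)) + 11/3)*(((n:ℝ)) + 14/3))) := by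
      simp only [co]
      rw [div_mul_div_comm, div_eq_div_iff (hB n) hfD]
      rw [r_eq, s_eq, p_eq]; push_cast; ring
    have eB1 : co (4/3) (-1/3) (8/3) (n+1) = (Polynomial.eval (-5/3:ℝ) (ascPochhammer ℝ n) / (n.factorial:ℝ)) * (((4/3)*(((n:ℝ)) - 5/3)*(((n:ℝ)) - 2/3)*(((n:ℝ)) + 1/3)*(((n:ℝ)) + 4/3)*(((n:ℝ)) - 4/3)*(((n:ℝ)) + 2)*(((n:ℝ)) + 11/3)*(((n:ℝ)) + 3)*(((n:ℝ)) + 14/3)*(-3/4)*(((n:ℝ)) - 1/3))/((((n:ℝ)) - 4/3)*(((n:ℝ)) - 1/3)*(((n:ℝ)) + 2/3)*(((n:ℝ)) + 5/3)*(((n:ℝ)) + 1)*(((n:ℝ)) + 2)*(((n:ℝ)) + 3)*(((n:ℝ)) + 8/3)*(((n:ℝ)) + 11/3)*(((n:ℝ)) + 14/3))) := by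
      simp only [co]
      rw [div_mul_div_comm, div_eq_div_iff (hB (n+1)) hfD]
      simp only [Pev_succ, Nat.factorial_succ]; rw [r_eq, s_eq, p_eq]; push_cast; ring
    have eB2 : co (4/3) (-1/3) (8/3) (n+1+1) = (Polynomial.eval (-5/3:ℝ) (ascPochhammer ℝ n) / (n.factorial:ℝ)) * (((4/3)*(((n:ℝ)) - 5/3)*(((n:ℝ)) - 2/3)*(((n:ℝ)) + 1/3)*(((n:ℝ)) + 4/3)*(((n:ℝ)) - 4/3)*(((n:ℝ)) + 7/3)*(((n:ℝ)) - 1/3)*(((n:ℝ)) + 3)*(((n:ℝ)) + 14/3)*(-3/4)*(((n:ℝ)) + 2/3))/((((n:ℝ)) - 4/3)*(((n:ℝ)) - 1/3)*(((n:ℝ)) + 2/3)*(((n:ℝ)) + 5/3)*(((n:ℝ)) + 1)*(((n:ℝ)) + 2)*(((n:ℝ)) + 3)*(((n:ℝ)) + 8/3)*(((n:ℝ)) + 11/3)*(((n:ℝ)) + 14/3))) := by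
      simp only [co]
      rw [div_mul_div_comm, div_eq_div_iff (hB (n+1+1)) hfD]
      simp only [Pev_succ, Nat.factorial_succ]; rw [r_eq, s_eq, p_eq]; push_cast; ring
    have eB3 : co (4/3) (-1/3) (8/3) (n+1+1+1) = (Polynomial.eval (-5/3:ℝ) (ascPochhammer ℝ n) / (n.factorial:ℝ)) * (((4/3)*(((n:ℝ)) - 5/3)*(((n:ℝ)) - 2/3)*(((n:ℝ)) + 1/3)*(((n:ℝ)) + 4/3)*(((n:ℝ)) - 4/3)*(((n:ℝ)) + 7/3)*(((n:ℝ)) - 1/3)*(((n:ℝ)) + 10/3)*(((n:ℝ)) + 2/3)*(-3/4)*(((n:ℝ)) + 5/3))/((((n:ℝ)) - 4/3)*(((n:ℝ)) - 1/3)*(((n:ℝ)) + 2/3)*(((n:ℝ)) + 5/3)*(((n:ℝ)) + 1)*(((n:ℝ)) + 2)*(((n:ℝ)) + 3)*(((n:ℝ)) + 8/3)*(((n:ℝ)) + 11/3)*(((n:ℝ)) + 14/3))) := by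
      simp only [co]
      rw [div_mul_div_comm, div_eq_div_iff (hB (n+1+1+1)) hfD]
      simp only [Pev_succ, Nat.factorial_succ]; rw [r_eq, s_eq, p_eq]; push_cast; ring
    have eC : Cco (n+1+1+1) = (Polynomial.eval (-5/3:ℝ) (ascPochhammer ℝ n) / (n.factorial:ℝ)) * (((((n:ℝ)) - 5/3)*(((n:ℝ)) - 2/3)*(((n:ℝ)) + 1/3)*(((n:ℝ)) - 4/3)*(((n:ℝ)) - 1/3)*(((n:ℝ)) + 2/3)*(((n:ℝ)) + 5/3)*(((n:ℝ)) + 8/3)*(((n:ℝ)) + 11/3)*(((n:ℝ)) + 14/3))/((((n:ℝ)) - 4/3)*(((n:ℝ)) - 1/3)*(((n:ℝ)) + 2/3)*(((n:ℝ)) + 5/3)*(((n:ℝ)) + 1)*(((n:ℝ)) + 2)*(((n:ℝ)) + 3)*(((n:ℝ)) + 8/3)*(((n:ℝ)) + 11/3)*(((n:ℝ)) + 14/3))) := by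
      simp only [Cco]
      rw [div_mul_div_comm, div_eq_div_iff (hFa (n+1+1+1)) hfD]
      simp only [Pev_succ, Nat.factorial_succ]; push_cast; ring
    simp only [sh_succ]
    rw [eA3, eA2, eA1, eB3, eB2, eB1, eB0, eC]
    ring



private lemma summ_pow {c : ℕ → ℝ} {z : ℝ} (hz : |z| < 1) {N : ℕ}
    (hc : ∀ n, N ≤ n → |c (n+1)| ≤ |c n|) : Summable (fun n => c n * z ^ n) := by
  apply summable_of_ratio_norm_eventually_le hz
  filter_upwards [Filter.eventually_ge_atTop N] with n hn
  have h := hc n hn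
  have h1 : ‖c (n+1) * z ^ (n+1)‖ = |c (n+1)| * (|z| ^ n * |z|) := by
    rw [Real.norm_eq_abs, abs_mul, abs_pow, pow_succ]
  have h2 : ‖c n * z ^ n‖ = |c n| * |z| ^ n := by rw [Real.norm_eq_abs, abs_mul, abs_pow]
  rw [h1, h2]
  calc |c (n+1)| * (|z| ^ n * |z|) ≤ |c n| * (|z| ^ n * |z|) :=
        mul_le_mul_of_nonneg_right h (by positivity)
    _ = |z| * (|c n| * |z| ^ n) := by ring

private lemma summ_aux {c : ℕ → ℝ} {z : ℝ} (hz : |z| < 1) {N : ℕ}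
    (hrec : ∀ n, N ≤ n → ∃ q : ℝ, |q| ≤ 1 ∧ c (n+1) = c n * q) :
    Summable fun n => c n * z ^ n :=
  summ_pow hz (N := N) (fun n hn => by
    obtain ⟨q, hq, he⟩ := hrec n hn
    rw [he, abs_mul]
    exact mul_le_of_le_one_right (abs_nonneg _) hq)

private lemma Crec (n : ℕ) : ((n:ℝ)+1) * Cco (n+1) = Cco n * ((n:ℝ) - 5/3) := by
  have hf : ((n.factorial:ℝ)) ≠ 0 := by positivity
  simp only [Cco, Pev_succ, Nat.factorial_succ]
  push_cast
  field_simp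
  ring

private lemma Cquot (n : ℕ) : Cco (n+1) = Cco n * (((n:ℝ) - 5/3) / ((n:ℝ)+1)) := by
  have hne : ((n:ℝ)+1) ≠ 0 := by positivity
  rw [← mul_div_assoc, eq_div_iff hne]
  linear_combination Crec n

private lemma Csumm {y : ℝ} (hy : |y| < 1) : Summable (fun n => Cco n * y ^ n) := by
  refine summ_aux hy (N := 1) (fun n hn => ⟨((n:ℝ) - 5/3) / ((n:ℝ)+1), ?_, Cquot n⟩)
  have h1 : (1:ℝ) ≤ (n:ℝ) := by exact_mod_cast hn
  rw [abs_div, abs_of_pos (by linarith : (0:ℝ) < (n:ℝ)+1), div_le_one (by linarith)]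
  rw [abs_le]
  constructor <;> linarith

private lemma Cdsumm {r : ℝ} (hr : |r| < 1) :
    Summable (fun n => |Cco n| * (n:ℝ) * r ^ (n-1)) := by
  have h1 : Summable (fun n => (|Cco (n+1)| * ((n:ℝ)+1)) * r ^ n) := by
    refine summ_aux hr (N := 0) (fun n _ => ?_)
    have hn0 : (0:ℝ) ≤ (n:ℝ) := Nat.cast_nonneg n
    have hne1 : ((n:ℝ)+1+1) ≠ 0 := by positivity
    have h2 : Cco (n+1+1) = Cco (n+1) * ((((n:ℝ)+1) - 5/3) / (((n:ℝ)+1)+1)) := by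
      have := Cquot (n+1); push_cast at this ⊢; linarith [this]
    refine ⟨|((n:ℝ) - 2/3)| / ((n:ℝ)+1), ?_, ?_⟩
    · rw [abs_div, abs_abs, abs_of_pos (by linarith : (0:ℝ) < (n:ℝ)+1),
        div_le_one (by linarith)]
      rw [abs_le]
      constructor <;> linarith
    · have he : ((n:ℝ)+1) - 5/3 = (n:ℝ) - 2/3 := by ring
      rw [h2, abs_mul, abs_div, he]
      have : |(((n:ℝ)+1)+1)| = ((n:ℝ)+1)+1 := abs_of_pos (by linarith)
      rw [this]
      push_cast
      have hne2 : ((n:ℝ)+1) ≠ 0 := by positivity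
      field_simp
  have h2 : Summable (fun n => |Cco (n+1)| * ((n+1:ℕ):ℝ) * r ^ ((n+1)-1)) := by
    refine h1.congr (fun n => ?_)
    simp only [Nat.add_sub_cancel]
    push_cast
    ring
  exact (summable_nat_add_iff 1).1 h2

private lemma hasSum_Cco {z : ℝ} (hz : |z| < 1) :
    HasSum (fun n => Cco n * z ^ n) ((1 - z) ^ ((5:ℝ)/3)) := by
  have habs := abs_nonneg z
  set r : ℝ := (|z| + 1) / 2 with hrdef
  have hr0 : 0 < r := by positivity
  have hr1 : r < 1 := by rw [hrdef]; linarith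
  have hzr : |z| < r := by rw [hrdef]; linarith
  have hrabs : |r| < 1 := by rw [abs_of_pos hr0]; exact hr1
  set t : Set ℝ := Set.Ioo (-r) r with htdef
  have hz_t : z ∈ t := by
    rw [htdef]
    exact ⟨by linarith [neg_abs_le z], by linarith [le_abs_self z]⟩
  have h0_t : (0:ℝ) ∈ t := ⟨by linarith, by linarith⟩
  have habs_lt : ∀ y ∈ t, |y| < 1 := fun y hy => by
    rw [abs_lt]; exact ⟨by linarith [hy.1], by linarith [hy.2]⟩
  set F : ℝ → ℝ := fun y => ∑' n, Cco n * y ^ n with hFdef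
  set D : ℝ → ℝ := fun y => ∑' n, Cco n * ((n:ℝ) * y ^ (n-1)) with hDdef
  -- derivative of F on t
  have hderiv : ∀ y ∈ t, HasDerivAt F (D y) y := by
    intro y hy
    exact hasDerivAt_tsum_of_isPreconnected (Cdsumm hrabs) isOpen_Ioo
      (convex_Ioo _ _).isPreconnected
      (fun m w _ => (hasDerivAt_pow m w).const_mul (Cco m))
      (fun m w hw => by
        have h1 : ‖Cco m * ((m:ℝ) * w ^ (m-1))‖ = |Cco m| * ((m:ℝ) * |w| ^ (m-1)) := by
          rw [Real.norm_eq_abs, abs_mul, abs_mul, abs_pow, Nat.abs_cast]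
        rw [h1]
        have hwr : |w| ≤ r := le_of_lt (abs_lt.2 ⟨by linarith [hw.1], by linarith [hw.2]⟩)
        have : |w| ^ (m-1) ≤ r ^ (m-1) := pow_le_pow_left₀ (abs_nonneg w) hwr _
        calc |Cco m| * ((m:ℝ) * |w| ^ (m-1)) ≤ |Cco m| * ((m:ℝ) * r ^ (m-1)) := by
              apply mul_le_mul_of_nonneg_left _ (abs_nonneg _)
              exact mul_le_mul_of_nonneg_left this (Nat.cast_nonneg m)
          _ = |Cco m| * (m:ℝ) * r ^ (m-1) := by ring)
      h0_t (Csumm (by simpa using habs_lt 0 h0_t)) hy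
  -- the ODE
  have hODE : ∀ y ∈ t, D y * (1 - y) + 5/3 * F y = 0 := by
    intro y hy
    have hy1 := habs_lt y hy
    have hFy : HasSum (fun n => Cco n * y ^ n) (F y) := (Csumm hy1).hasSum
    have hDsummable : Summable (fun n => Cco n * ((n:ℝ) * y ^ (n-1))) := by
      refine Summable.of_norm_bounded (Cdsumm hrabs) (fun m => ?_)
      have h1 : ‖Cco m * ((m:ℝ) * y ^ (m-1))‖ = |Cco m| * ((m:ℝ) * |y| ^ (m-1)) := by
        rw [Real.norm_eq_abs, abs_mul, abs_mul, abs_pow, Nat.abs_cast]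
      rw [h1]
      have hwr : |y| ≤ r := le_of_lt (abs_lt.2 ⟨by linarith [hy.1], by linarith [hy.2]⟩)
      have : |y| ^ (m-1) ≤ r ^ (m-1) := pow_le_pow_left₀ (abs_nonneg y) hwr _
      calc |Cco m| * ((m:ℝ) * |y| ^ (m-1)) ≤ |Cco m| * ((m:ℝ) * r ^ (m-1)) := by
            apply mul_le_mul_of_nonneg_left _ (abs_nonneg _)
            exact mul_le_mul_of_nonneg_left this (Nat.cast_nonneg m)
        _ = |Cco m| * (m:ℝ) * r ^ (m-1) := by ring
    have hDy : HasSum (fun n => Cco n * ((n:ℝ) * y ^ (n-1))) (D y) := hDsummable.hasSum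
    -- reindex : D y = ∑ (n+1) Cco (n+1) y^n
    have hDy' : HasSum (fun n => Cco (n+1) * (((n:ℝ)+1) * y ^ n)) (D y) := by
      have := (hasSum_nat_add_iff
        (f := fun n => Cco n * ((n:ℝ) * y ^ (n-1))) 1).2 (by simpa using hDy)
      refine this.congr (fun n => ?_)
      push_cast
      simp only [Nat.add_sub_cancel]
    -- y * D y
    have hyD : HasSum (fun n => Cco n * ((n:ℝ) * y ^ n)) (D y * y) := by
      have h1 := hDy'.mul_right y
      have h2 : (fun n => Cco (n+1) * (((n:ℝ)+1) * y ^ n) * y)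
          = fun n => Cco (n+1) * (((n+1:ℕ):ℝ) * y ^ (n+1)) := by
        funext n; push_cast; ring
      rw [h2] at h1
      have h3 := (hasSum_nat_add_iff (f := fun n => Cco n * ((n:ℝ) * y ^ n)) 1).1 h1
      simpa using h3
    have hcomb := (hDy'.sub hyD).add (hFy.mul_left (5/3))
    have hzero : (fun n => (Cco (n+1) * (((n:ℝ)+1) * y ^ n) - Cco n * ((n:ℝ) * y ^ n))
        + 5/3 * (Cco n * y ^ n)) = fun _ => (0:ℝ) := by
      funext n
      linear_combination y ^ n * Crec n
    rw [hzero] at hcomb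
    have := hcomb.unique hasSum_zero
    linear_combination this
  -- h := F * (1-y)^(-5/3) is constant on t
  set G : ℝ → ℝ := fun y => F y * (1 - y) ^ (-(5:ℝ)/3) with hGdef
  have hGderiv : ∀ y ∈ t, HasDerivWithinAt G 0 t y := by
    intro y hy
    have hpos : (0:ℝ) < 1 - y := by linarith [(habs_lt y hy), abs_lt.1 (habs_lt y hy)]
    have h1 : HasDerivAt (fun w : ℝ => 1 - w) (-1) y := by
      simpa using (hasDerivAt_id y).const_sub 1
    have h2 := (Real.hasDerivAt_rpow_const (x := 1 - y) (p := -(5:ℝ)/3)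
      (Or.inl hpos.ne')).comp y h1
    have h3 : HasDerivAt (fun w : ℝ => (1 - w) ^ (-(5:ℝ)/3))
        ((5:ℝ)/3 * (1 - y) ^ (-(8:ℝ)/3)) y := by
      refine h2.congr_deriv ?_
      rw [show (-(5:ℝ)/3 - 1) = -(8:ℝ)/3 by norm_num]
      ring
    have h4 := (hderiv y hy).mul h3
    have hval : D y * (1 - y) ^ (-(5:ℝ)/3) + F y * ((5:ℝ)/3 * (1 - y) ^ (-(8:ℝ)/3)) = 0 := by
      have hfac : (1 - y) ^ (-(5:ℝ)/3) = (1 - y) ^ (-(8:ℝ)/3) * (1 - y) := by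
        rw [← Real.rpow_add_one hpos.ne']
        norm_num
      rw [hfac]
      linear_combination ((1 - y) ^ (-(8:ℝ)/3)) * hODE y hy
    rw [hval] at h4
    exact h4.hasDerivWithinAt
  have hconst : G z = G 0 := by
    have := Convex.norm_image_sub_le_of_norm_hasDerivWithin_le
      (f := G) (f' := fun _ => (0:ℝ)) (C := 0) hGderiv
      (fun x _ => by simp) (convex_Ioo _ _) h0_t hz_t
    have h0 : ‖G z - G 0‖ ≤ 0 := by simpa using this
    have := norm_nonneg (G z - G 0)
    have heq : ‖G z - G 0‖ = 0 := le_antisymm h0 this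
    rw [norm_eq_zero, sub_eq_zero] at heq
    exact heq
  have hF0 : F 0 = 1 := by
    have h1 : HasSum (fun n => Cco n * (0:ℝ) ^ n) (Cco 0 * (0:ℝ) ^ 0) := by
      apply hasSum_single 0
      intro b hb
      rcases Nat.exists_eq_succ_of_ne_zero hb with ⟨m, rfl⟩
      simp
    have h2 : Cco 0 * (0:ℝ) ^ 0 = 1 := by norm_num [Cco]
    rw [hFdef]
    rw [h2] at h1
    exact h1.tsum_eq
  have hG0 : G 0 = 1 := by
    rw [hGdef]
    simp only [hF0]
    norm_num
  have hzpos : (0:ℝ) < 1 - z := by linarith [abs_lt.1 hz]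
  have hFz : F z = (1 - z) ^ ((5:ℝ)/3) := by
    have heq : F z * (1 - z) ^ (-(5:ℝ)/3) = 1 := hconst.trans hG0
    have hinv : (1 - z) ^ (-(5:ℝ)/3) * (1 - z) ^ ((5:ℝ)/3) = 1 := by
      rw [← Real.rpow_add hzpos]
      norm_num
    linear_combination ((1 - z) ^ ((5:ℝ)/3)) * heq - F z * hinv
  have h := (Csumm hz).hasSum
  rw [show ∑' n, Cco n * z ^ n = F z from rfl, hFz] at h
  exact h


private lemma hasSum_sh {f : ℕ → ℝ} {z S : ℝ} (h : HasSum (fun n => f n * z ^ n) S) :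
    HasSum (fun n => sh f n * z ^ n) (z * S) := by
  have h1 : HasSum (fun n => sh f (n + 1) * z ^ (n + 1)) (z * S) := by
    have h2 : (fun n => sh f (n + 1) * z ^ (n + 1)) = fun n => z * (f n * z ^ n) := by
      funext n; simp [pow_succ]; ring
    rw [h2]; exact h.mul_left z
  have h3 := (hasSum_nat_add_iff (f := fun n => sh f n * z ^ n) 1).1 h1
  simpa using h3

private lemma Arec (n : ℕ) (hn : 2 ≤ n) :
    ∃ q : ℝ, |q| ≤ 1 ∧ co (4/3) (-4/3) (8/3) (n+1) = co (4/3) (-4/3) (8/3) n * q := by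
  have hn2 : (2:ℝ) ≤ (n:ℝ) := by exact_mod_cast hn
  have hB : ∀ m : ℕ, Polynomial.eval (8/3:ℝ) (ascPochhammer ℝ m) * ((m.factorial : ℝ)) ≠ 0 :=
    fun m => mul_ne_zero (Pev_pos (by norm_num) m).ne' (by positivity)
  have hden : (((n:ℝ)+8/3) * ((n:ℝ)+1)) ≠ 0 := by positivity
  refine ⟨(((n:ℝ)+4/3) * ((n:ℝ)-4/3)) / (((n:ℝ)+8/3) * ((n:ℝ)+1)), ?_, ?_⟩
  · rw [abs_div, abs_of_nonneg (by nlinarith : (0:ℝ) ≤ ((n:ℝ)+4/3) * ((n:ℝ)-4/3)),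
      abs_of_pos (by positivity : (0:ℝ) < ((n:ℝ)+8/3) * ((n:ℝ)+1)),
      div_le_one (by positivity)]
    nlinarith
  · simp only [co]
    rw [div_mul_div_comm, div_eq_div_iff (hB (n+1)) (mul_ne_zero (hB n) hden)]
    simp only [Pev_succ, Nat.factorial_succ]
    push_cast
    ring

private lemma Brec (n : ℕ) (hn : 1 ≤ n) :
    ∃ q : ℝ, |q| ≤ 1 ∧ co (4/3) (-1/3) (8/3) (n+1) = co (4/3) (-1/3) (8/3) n * q := by
  have hn2 : (1:ℝ) ≤ (n:ℝ) := by exact_mod_cast hn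
  have hB : ∀ m : ℕ, Polynomial.eval (8/3:ℝ) (ascPochhammer ℝ m) * ((m.factorial : ℝ)) ≠ 0 :=
    fun m => mul_ne_zero (Pev_pos (by norm_num) m).ne' (by positivity)
  have hden : (((n:ℝ)+8/3) * ((n:ℝ)+1)) ≠ 0 := by positivity
  refine ⟨(((n:ℝ)+4/3) * ((n:ℝ)-1/3)) / (((n:ℝ)+8/3) * ((n:ℝ)+1)), ?_, ?_⟩
  · rw [abs_div, abs_of_nonneg (by nlinarith : (0:ℝ) ≤ ((n:ℝ)+4/3) * ((n:ℝ)-1/3)),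
      abs_of_pos (by positivity : (0:ℝ) < ((n:ℝ)+8/3) * ((n:ℝ)+1)),
      div_le_one (by positivity)]
    nlinarith
  · simp only [co]
    rw [div_mul_div_comm, div_eq_div_iff (hB (n+1)) (mul_ne_zero (hB n) hden)]
    simp only [Pev_succ, Nat.factorial_succ]
    push_cast
    ring


open scoped BigOperators

/-- The Gauss hypergeometric series `F(a,b,c;z)`. -/
noncomputable def hypF (a b c z : ℝ) : ℝ :=
  ∑' n : ℕ,
    (Polynomial.eval a (ascPochhammer ℝ n) * Polynomial.eval b (ascPochhammer ℝ n) /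
      (Polynomial.eval c (ascPochhammer ℝ n) * (n.factorial : ℝ))) * z ^ n

theorem stmt12 (l : ℝ) (h0 : 0 < l) (h2 : l < 2) :
    6 * (l ^ 2 - l + 1) * hypF (4 / 3) (-4 / 3) (8 / 3) (1 - l)
      - (2 / 3) * (l + 1) * (5 * l ^ 2 - 8 * l + 5) * hypF (4 / 3) (-1 / 3) (8 / 3) (1 - l)
      = (10 / 3) * l ^ ((5 : ℝ) / 3) := by
  obtain ⟨z, hzdef⟩ : ∃ z : ℝ, z = 1 - l := ⟨1 - l, rfl⟩
  rw [← hzdef]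
  have hz : |z| < 1 := by rw [hzdef, abs_lt]; constructor <;> linarith
  have hA : HasSum (fun n => co (4/3) (-4/3) (8/3) n * z ^ n)
      (hypF (4 / 3) (-4 / 3) (8 / 3) z) := by
    have hs : Summable (fun n => co (4/3) (-4/3) (8/3) n * z ^ n) := summ_aux hz (N := 2) Arec
    have he : hypF (4 / 3) (-4 / 3) (8 / 3) z = ∑' n, co (4/3) (-4/3) (8/3) n * z ^ n := rfl
    rw [he]
    exact hs.hasSum
  have hBs : HasSum (fun n => co (4/3) (-1/3) (8/3) n * z ^ n)
      (hypF (4 / 3) (-1 / 3) (8 / 3) z) := by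
    have hs : Summable (fun n => co (4/3) (-1/3) (8/3) n * z ^ n) := summ_aux hz (N := 1) Brec
    have he : hypF (4 / 3) (-1 / 3) (8 / 3) z = ∑' n, co (4/3) (-1/3) (8/3) n * z ^ n := rfl
    rw [he]
    exact hs.hasSum
  have hC : HasSum (fun n => Cco n * z ^ n) ((1 - z) ^ ((5:ℝ)/3)) := hasSum_Cco hz
  have hA1 := hasSum_sh hA
  have hA2 := hasSum_sh hA1
  have hB1 := hasSum_sh hBs
  have hB2 := hasSum_sh hB1
  have hB3 := hasSum_sh hB2
  have hcomb := (((((((hA.mul_left 6).sub (hA1.mul_left 6)).add (hA2.mul_left 6)).sub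
    (hBs.mul_left (8/3))).add (hB1.mul_left 4)).sub (hB2.mul_left 8)).add
    (hB3.mul_left (10/3))).sub (hC.mul_left (10/3))
  set SA := hypF (4 / 3) (-4 / 3) (8 / 3) z with hSA
  set SB := hypF (4 / 3) (-1 / 3) (8 / 3) z with hSB
  have h1 : HasSum (fun n =>
      (6 * co (4/3) (-4/3) (8/3) n - 6 * sh (co (4/3) (-4/3) (8/3)) n
        + 6 * sh (sh (co (4/3) (-4/3) (8/3))) n
        - (8/3) * co (4/3) (-1/3) (8/3) n + 4 * sh (co (4/3) (-1/3) (8/3)) n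
        - 8 * sh (sh (co (4/3) (-1/3) (8/3))) n
        + (10/3) * sh (sh (sh (co (4/3) (-1/3) (8/3)))) n
        - (10/3) * Cco n) * z ^ n)
      (6 * SA - 6 * (z * SA) + 6 * (z * (z * SA)) - 8/3 * SB + 4 * (z * SB)
        - 8 * (z * (z * SB)) + 10/3 * (z * (z * (z * SB)))
        - 10/3 * ((1 - z) ^ ((5:ℝ)/3))) := by
    convert hcomb using 2 with n
    · rfl
    ring
  have h2 : (fun n =>
      (6 * co (4/3) (-4/3) (8/3) n - 6 * sh (co (4/3) (-4/3) (8/3)) n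
        + 6 * sh (sh (co (4/3) (-4/3) (8/3))) n
        - (8/3) * co (4/3) (-1/3) (8/3) n + 4 * sh (co (4/3) (-1/3) (8/3)) n
        - 8 * sh (sh (co (4/3) (-1/3) (8/3))) n
        + (10/3) * sh (sh (sh (co (4/3) (-1/3) (8/3)))) n
        - (10/3) * Cco n) * z ^ n) = (fun _ : ℕ => (0:ℝ)) := by
    funext n
    rw [Tzero n, zero_mul]
  rw [h2] at h1
  have hV := h1.unique hasSum_zero
  have hl : l = 1 - z := by rw [hzdef]; ring
  rw [hl]
  linear_combination hV
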